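/- arXiv:1412.2226 — 2 statements merged into one kernel-verified Lean document; each statement's English description precedes it below -/
import Mathlib

section
/- Suppose the allocation M is the outcome of some recursively balanced policy. Then for every recursively balanced policy π whose outcome is M and for every round index t with 1 ≤ t ≤ k, each agent a_j picks exactly the item p_j^t at her turn in round t of π. -/
open Finset
open scoped Classical

/-- The most preferred item of a nonempty finset w.r.t. a linear order
(greater means more preferred). -/
noncomputable def favorite {ι : Type} (L : LinearOrder ι) (S : Finset ι) (h : S.Nonempty) : ι :=
  @Finset.max' ι L S h

/-- Sequential allocation: process the turns in order; at each turn the agent whose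
turn it is picks her most preferred item among the items not yet allocated.
Returns the list of (agent, item) picks, in order. -/
noncomputable def seqAlloc {n : ℕ} {ι : Type} [DecidableEq ι]
    (P : Fin n → LinearOrder ι) : List (Fin n) → Finset ι → List (Fin n × ι)
  | [], _ => []
  | a :: rest, S =>
    if h : S.Nonempty then
      (a, favorite (P a) S h) :: seqAlloc P rest (S.erase (favorite (P a) S h))
    else []

/-- `M` is the outcome of the policy `π`: every item is picked by the agent that
`M` assigns it to. -/
def IsOutcome {n : ℕ} {ι : Type} [Fintype ι] [DecidableEq ι]
    (P : Fin n → LinearOrder ι) (π : List (Fin n)) (M : ι → Fin n) : Prop :=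
  ∀ o : ι, (M o, o) ∈ seqAlloc P π Finset.univ

/-- The set of items that agent `a` picks under the policy `π`. -/
noncomputable def receives {n : ℕ} {ι : Type} [Fintype ι] [DecidableEq ι]
    (P : Fin n → LinearOrder ι) (π : List (Fin n)) (a : Fin n) : Finset ι :=
  Finset.univ.filter (fun o => (a, o) ∈ seqAlloc P π Finset.univ)

/-- An allocation `M` is Pareto optimal if there is no bijection `f` of the items such
that every agent weakly prefers `f o` to `o` for each item `o` she gets, with at least
one strict preference. -/
def ParetoOptimal {n : ℕ} {ι : Type} (P : Fin n → LinearOrder ι) (M : ι → Fin n) : Prop :=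
  ¬ ∃ f : ι ≃ ι, (∀ o : ι, (P (M o)).le o (f o)) ∧ (∃ o : ι, (P (M o)).lt o (f o))

/-- A policy is balanced if every agent has exactly `k` turns. -/
def BalancedPolicy {n : ℕ} (k : ℕ) (π : List (Fin n)) : Prop :=
  ∀ a : Fin n, π.count a = k

/-- An allocation is balanced if every agent receives exactly `k` items. -/
def BalancedAlloc {n : ℕ} {ι : Type} [Fintype ι] (k : ℕ) (M : ι → Fin n) : Prop :=
  ∀ a : Fin n, (Finset.univ.filter (fun o => M o = a)).card = k

/-- A policy is recursively balanced if it splits into `k` consecutive rounds of `n`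
turns each, every agent having exactly one turn in each round. -/
def RecBalanced (n k : ℕ) (π : List (Fin n)) : Prop :=
  ∃ rounds : List (List (Fin n)), rounds.length = k ∧
    (∀ r ∈ rounds, r.length = n ∧ ∀ a : Fin n, r.count a = 1) ∧
    π = rounds.flatten

/-- A strict alternation policy: every one of the `k` rounds uses the same order `σ`
over the agents. -/
def StrictAlt (n k : ℕ) (π : List (Fin n)) : Prop :=
  ∃ σ : List (Fin n), σ.length = n ∧ (∀ a : Fin n, σ.count a = 1) ∧
    π = (List.replicate k σ).flatten

/-- A balanced alternation policy: odd-numbered rounds use the order `σ` over the agents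
and even-numbered rounds use its reverse. -/
def BalAlt (n k : ℕ) (π : List (Fin n)) : Prop :=
  ∃ σ : List (Fin n), σ.length = n ∧ (∀ a : Fin n, σ.count a = 1) ∧
    π = ((List.range k).map (fun r => if r % 2 = 0 then σ else σ.reverse)).flatten

/-- `p j i` (for `1 ≤ i ≤ k`) is the item ranked `i`-th by agent `j` among the items `M`
allocates to `j`: it is allocated to `j`, and exactly `i - 1` of the items allocated
to `j` are strictly preferred to it by agent `j`. -/
def IsRankingOf {n : ℕ} {ι : Type} [Fintype ι] (P : Fin n → LinearOrder ι) (k : ℕ)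
    (M : ι → Fin n) (p : Fin n → ℕ → ι) : Prop :=
  ∀ (j : Fin n) (i : ℕ), 1 ≤ i → i ≤ k →
    M (p j i) = j ∧
    (Finset.univ.filter (fun o => M o = j ∧ (P j).lt (p j i) o)).card = i - 1

/-- Condition 3: for all `1 ≤ t < s ≤ k` and all agents `j, j'`, agent `j` strictly
prefers `p j t` to `p j' s`. -/
def Cond3 {n : ℕ} {ι : Type} (P : Fin n → LinearOrder ι) (k : ℕ) (p : Fin n → ℕ → ι) : Prop :=
  ∀ t s : ℕ, 1 ≤ t → t < s → s ≤ k → ∀ j j' : Fin n, (P j).lt (p j' s) (p j t)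

/-- The edge relation of the directed graph `G_M`: for odd `i ≤ k` an edge `a → b`
whenever `b` strictly prefers `p a i` to `p b i`, and for even `i ≤ k` an edge `a → b`
whenever `a` strictly prefers `p b i` to `p a i`. -/
def GM {n : ℕ} {ι : Type} (P : Fin n → LinearOrder ι) (k : ℕ) (p : Fin n → ℕ → ι)
    (a b : Fin n) : Prop :=
  (∃ i : ℕ, 1 ≤ i ∧ i ≤ k ∧ i % 2 = 1 ∧ (P b).lt (p b i) (p a i)) ∨
  (∃ i : ℕ, 1 ≤ i ∧ i ≤ k ∧ i % 2 = 0 ∧ (P a).lt (p a i) (p b i))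

/-- The edge relation of the directed graph `H_M`: for each `i ≤ k` an edge `a → b`
whenever `b` strictly prefers `p a i` to `p b i`. -/
def HM {n : ℕ} {ι : Type} (P : Fin n → LinearOrder ι) (k : ℕ) (p : Fin n → ℕ → ι)
    (a b : Fin n) : Prop :=
  ∃ i : ℕ, 1 ≤ i ∧ i ≤ k ∧ (P b).lt (p b i) (p a i)

/-- The `k` most preferred items of agent `j`: those items with fewer than `k` items
strictly preferred to them by `j`. -/
noncomputable def topItems {n : ℕ} {ι : Type} [Fintype ι] (P : Fin n → LinearOrder ι)
    (k : ℕ) (j : Fin n) : Finset ι :=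
  Finset.univ.filter (fun o => (Finset.univ.filter (fun o' => (P j).lt o o')).card < k)

/-- The rank of item `o` in agent `j`'s preference (the most preferred item has rank 1). -/
noncomputable def rankOf {n : ℕ} {ι : Type} [Fintype ι] (P : Fin n → LinearOrder ι)
    (j : Fin n) (o : ι) : ℕ :=
  (Finset.univ.filter (fun o' => (P j).lt o o')).card + 1
set_option linter.unusedVariables false

set_option linter.unusedSectionVars false
section Aux
variable {n : ℕ} {ι : Type} [DecidableEq ι]

lemma favorite_mem (L : LinearOrder ι) (S : Finset ι) (h : S.Nonempty) :
    favorite L S h ∈ S := @Finset.max'_mem ι L S h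

lemma le_favorite (L : LinearOrder ι) (S : Finset ι) (h : S.Nonempty) {o : ι} (ho : o ∈ S) :
    L.le o (favorite L S h) := @Finset.le_max' ι L S o ho

lemma seqAlloc_nil (P : Fin n → LinearOrder ι) (S : Finset ι) : seqAlloc P [] S = [] := by
  simp [seqAlloc]

lemma seqAlloc_cons (P : Fin n → LinearOrder ι) (a : Fin n) (rest : List (Fin n))
    (S : Finset ι) (h : S.Nonempty) :
    seqAlloc P (a :: rest) S =
      (a, favorite (P a) S h) :: seqAlloc P rest (S.erase (favorite (P a) S h)) := by
  simp [seqAlloc, h]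

lemma seqAlloc_snd_mem (P : Fin n → LinearOrder ι) :
    ∀ (π : List (Fin n)) (S : Finset ι) (b : Fin n) (o : ι),
      (b, o) ∈ seqAlloc P π S → o ∈ S
  | [], S, b, o => by simp [seqAlloc]
  | a :: rest, S, b, o => by
    by_cases h : S.Nonempty
    · rw [seqAlloc_cons P a rest S h]
      intro hm
      rcases List.mem_cons.1 hm with h1 | h2
      · cases h1; exact favorite_mem _ _ h
      · exact Finset.mem_of_mem_erase (seqAlloc_snd_mem P rest _ b o h2)
    · simp [seqAlloc, h]

lemma seqAlloc_snd_nodup (P : Fin n → LinearOrder ι) :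
    ∀ (π : List (Fin n)) (S : Finset ι), ((seqAlloc P π S).map Prod.snd).Nodup
  | [], S => by simp [seqAlloc]
  | a :: rest, S => by
    by_cases h : S.Nonempty
    · rw [seqAlloc_cons P a rest S h]
      simp only [List.map_cons, List.nodup_cons]
      refine ⟨?_, seqAlloc_snd_nodup P rest _⟩
      intro hmem
      rcases List.mem_map.1 hmem with ⟨⟨b, o⟩, hbo, rfl⟩
      exact (Finset.notMem_erase _ S) (seqAlloc_snd_mem P rest _ b _ hbo)
    · simp [seqAlloc, h]

lemma seqAlloc_map_fst (P : Fin n → LinearOrder ι) :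
    ∀ (π : List (Fin n)) (S : Finset ι), π.length ≤ S.card →
      (seqAlloc P π S).map Prod.fst = π
  | [], S, _ => by simp [seqAlloc]
  | a :: rest, S, hle => by
    have h : S.Nonempty := Finset.card_pos.1 (lt_of_lt_of_le (Nat.succ_pos _) hle)
    rw [seqAlloc_cons P a rest S h]
    have hcard : rest.length ≤ (S.erase (favorite (P a) S h)).card := by
      rw [Finset.card_erase_of_mem (favorite_mem _ _ h)]
      simp only [List.length_cons] at hle
      omega
    rw [List.map_cons, seqAlloc_map_fst P rest _ hcard]

end Aux

set_option linter.unusedSectionVars false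
section Aux2
variable {n k : ℕ} {ι : Type} [Fintype ι] [DecidableEq ι]
  {P : Fin n → LinearOrder ι} {M : ι → Fin n} {p : Fin n → ℕ → ι}

lemma rank_lt (hp : IsRankingOf P k M p) {j : Fin n} {i i' : ℕ}
    (h1 : 1 ≤ i) (h2 : i < i') (h3 : i' ≤ k) : (P j).lt (p j i') (p j i) := by
  letI := P j
  obtain ⟨-, hci⟩ := hp j i h1 (le_trans (le_of_lt h2) h3)
  obtain ⟨hMi', hci'⟩ := hp j i' (by omega) h3
  rcases lt_trichotomy (p j i) (p j i') with hlt | heq | hgt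
  · exfalso
    have hsub : Finset.univ.filter (fun o => M o = j ∧ (P j).lt (p j i') o) ⊂
        Finset.univ.filter (fun o => M o = j ∧ (P j).lt (p j i) o) := by
      constructor
      · intro o ho
        simp only [Finset.mem_filter, Finset.mem_univ, true_and] at *
        exact ⟨ho.1, lt_trans hlt ho.2⟩
      · intro hcon
        have hm : p j i' ∈ Finset.univ.filter (fun o => M o = j ∧ (P j).lt (p j i') o) :=
          hcon (by simp only [Finset.mem_filter, Finset.mem_univ, true_and]; exact ⟨hMi', hlt⟩)
        exact lt_irrefl _ (Finset.mem_filter.1 hm).2.2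
    have := Finset.card_lt_card hsub
    omega
  · exfalso
    rw [heq] at hci
    omega
  · exact hgt

lemma rank_step (hp : IsRankingOf P k M p) {j : Fin n} {i : ℕ} {o : ι}
    (h1 : 1 ≤ i) (h2 : i < k) (hMo : M o = j) (hlt : (P j).lt (p j (i+1)) o) :
    o = p j i ∨ (P j).lt (p j i) o := by
  letI := P j
  obtain ⟨hMi, hci⟩ := hp j i h1 (le_of_lt h2)
  obtain ⟨hMi1, hci1⟩ := hp j (i+1) (by omega) h2
  set A := Finset.univ.filter (fun o => M o = j ∧ (P j).lt (p j i) o) with hA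
  set B := Finset.univ.filter (fun o => M o = j ∧ (P j).lt (p j (i+1)) o) with hB
  have hq : (P j).lt (p j (i+1)) (p j i) := rank_lt hp h1 (Nat.lt_succ_self i) h2
  have hsub : insert (p j i) A ⊆ B := by
    intro x hx
    rcases Finset.mem_insert.1 hx with rfl | hx
    · simp only [hB, Finset.mem_filter, Finset.mem_univ, true_and]; exact ⟨hMi, hq⟩
    · simp only [hA, hB, Finset.mem_filter, Finset.mem_univ, true_and] at hx ⊢
      exact ⟨hx.1, lt_trans hq hx.2⟩
  have hnotmem : p j i ∉ A := by
    intro hx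
    exact lt_irrefl _ (Finset.mem_filter.1 hx).2.2
  have hcard : B.card ≤ (insert (p j i) A).card := by
    rw [Finset.card_insert_of_notMem hnotmem]
    omega
  have heq := Finset.eq_of_subset_of_card_le hsub hcard
  have hoB : o ∈ B := by
    simp only [hB, Finset.mem_filter, Finset.mem_univ, true_and]; exact ⟨hMo, hlt⟩
  rw [← heq] at hoB
  rcases Finset.mem_insert.1 hoB with h | h
  · exact Or.inl h
  · exact Or.inr (Finset.mem_filter.1 h).2.2

lemma outcome_pairs (π : List (Fin n)) (hM : IsOutcome P π M)
    {b : Fin n} {o : ι} (hbo : (b, o) ∈ seqAlloc P π Finset.univ) : b = M o := by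
  have h2 := hM o
  have h3 := List.inj_on_of_nodup_map (seqAlloc_snd_nodup P π Finset.univ) hbo h2 rfl
  exact congrArg Prod.fst h3

lemma outcome_balanced (π : List (Fin n)) (hlen : π.length = Fintype.card ι)
    (hM : IsOutcome P π M) (j : Fin n) :
    (Finset.univ.filter (fun o => M o = j)).card = π.count j := by
  set L := seqAlloc P π Finset.univ with hL
  have hfst : L.map Prod.fst = π :=
    seqAlloc_map_fst P π _ (by rw [hlen, Finset.card_univ])
  set Lj := L.filter (fun q => q.1 == j) with hLj
  have hcnt : π.count j = Lj.length := by
    conv_lhs => rw [← hfst]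
    rw [List.count_eq_countP, List.countP_map, List.countP_eq_length_filter]
    rfl
  have hnd : (Lj.map Prod.snd).Nodup :=
    ((List.filter_sublist (l := L)).map Prod.snd).nodup (seqAlloc_snd_nodup P π Finset.univ)
  have hset : (Lj.map Prod.snd).toFinset = Finset.univ.filter (fun o => M o = j) := by
    ext o
    simp only [List.mem_toFinset, List.mem_map, Finset.mem_filter, Finset.mem_univ, true_and]
    constructor
    · rintro ⟨⟨b, o'⟩, hq, rfl⟩
      have hmem := List.mem_of_mem_filter hq
      have hbj : b = j := by
        have := List.of_mem_filter hq
        simpa using this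
      have := outcome_pairs π hM hmem
      rw [← this, hbj]
    · intro hMo
      refine ⟨(M o, o), ?_, rfl⟩
      rw [hLj]
      refine List.mem_filter.2 ⟨hM o, by simp [hMo]⟩
  rw [← hset, List.toFinset_card_of_nodup hnd, List.length_map, hcnt]

end Aux2

lemma core {n k : ℕ} {ι : Type} [Fintype ι] [DecidableEq ι]
    (P : Fin n → LinearOrder ι) (M : ι → Fin n) (p : Fin n → ℕ → ι)
    (hp : IsRankingOf P k M p)
    (hb : ∀ j, (Finset.univ.filter (fun o => M o = j)).card = k) :
    ∀ (π' : List (Fin n)) (S : Finset ι) (f : Fin n → ℕ),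
      (∀ j, π'.count j + f j = k) →
      (∀ j, (S.filter (fun o => M o = j)).card + f j = k) →
      (∀ j o, o ∈ S → M o = j → f j < k → (P j).le o (p j (f j + 1))) →
      (∀ o ∈ S, (M o, o) ∈ seqAlloc P π' S) →
      ∀ s (hs : s < π'.length),
        (seqAlloc P π' S)[s]? =
          some (π'.get ⟨s, hs⟩,
            p (π'.get ⟨s, hs⟩) ((π'.take s).count (π'.get ⟨s, hs⟩) + f (π'.get ⟨s, hs⟩) + 1))
  | [], S, f, _, _, _, _, s, hs => absurd hs (by simp)
  | a :: rest, S, f, hcount, hcard, hle, hout, s, hs => by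
    letI := P a
    have hfa : f a < k := by
      have h := hcount a
      rw [List.count_cons_self] at h
      omega
    set q := p a (f a + 1) with hqdef
    obtain ⟨hMq, hcq⟩ := hp a (f a + 1) (by omega) (by omega)
    -- q ∈ S
    have hqmem : q ∈ S := by
      by_contra hqS
      set T := S.filter (fun o => M o = a) with hT
      set U := Finset.univ.filter (fun o => M o = a ∧ (P a).lt q o) with hU
      have hdisj : Disjoint T U := by
        rw [Finset.disjoint_left]
        intro o hoT hoU
        have h1 := Finset.mem_filter.1 hoT
        have h2 := (Finset.mem_filter.1 hoU).2.2
        exact absurd h2 (not_lt.2 (hle a o h1.1 h1.2 hfa))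
      have hqT : q ∉ T := fun hx => hqS (Finset.mem_filter.1 hx).1
      have hqU : q ∉ U := fun hx => lt_irrefl _ (Finset.mem_filter.1 hx).2.2
      have hsub : insert q (T ∪ U) ⊆ Finset.univ.filter (fun o => M o = a) := by
        intro x hx
        rcases Finset.mem_insert.1 hx with rfl | hx
        · exact Finset.mem_filter.2 ⟨Finset.mem_univ _, hMq⟩
        · rcases Finset.mem_union.1 hx with hx | hx
          · exact Finset.mem_filter.2 ⟨Finset.mem_univ _, (Finset.mem_filter.1 hx).2⟩
          · exact Finset.mem_filter.2 ⟨Finset.mem_univ _, (Finset.mem_filter.1 hx).2.1⟩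
      have hc1 : (insert q (T ∪ U)).card = T.card + U.card + 1 := by
        rw [Finset.card_insert_of_notMem (by
          intro hx
          rcases Finset.mem_union.1 hx with hx | hx
          exacts [hqT hx, hqU hx]), Finset.card_union_of_disjoint hdisj]
      have hc2 := Finset.card_le_card hsub
      have hTc := hcard a
      rw [← hT] at hTc
      rw [hb a] at hc2
      have hUc : U.card = f a := by
        have hrfl : U = Finset.univ.filter (fun o => M o = a ∧ (P a).lt (p a (f a + 1)) o) := rfl
        rw [hrfl, hcq]
        omega
      omega
    have hS : S.Nonempty := ⟨q, hqmem⟩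
    -- the favorite is q
    have hfav : favorite (P a) S hS = q := by
      have h1 : (P a).le q (favorite (P a) S hS) := le_favorite _ _ hS hqmem
      have hMfav : M (favorite (P a) S hS) = a := by
        have h2 := hout _ (favorite_mem (P a) S hS)
        rw [seqAlloc_cons P a rest S hS] at h2
        rcases List.mem_cons.1 h2 with h3 | h3
        · exact congrArg Prod.fst h3
        · exact absurd (seqAlloc_snd_mem P rest _ _ _ h3) (Finset.notMem_erase _ S)
      have h2 : (P a).le (favorite (P a) S hS) q :=
        hle a _ (favorite_mem (P a) S hS) hMfav hfa
      exact le_antisymm h2 h1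
    rw [seqAlloc_cons P a rest S hS, hfav]
    match s, hs with
    | 0, hs => simp [hqdef]
    | s + 1, hs =>
      rw [List.getElem?_cons_succ]
      have hs' : s < rest.length := by simpa using hs
      have hIH := core P M p hp hb rest (S.erase q) (Function.update f a (f a + 1))
        (by
          intro j
          by_cases hj : j = a
          · subst hj
            have h := hcount j
            rw [List.count_cons_self] at h
            simp only [Function.update_self]
            omega
          · have h := hcount j
            rw [List.count_cons_of_ne (Ne.symm hj)] at h
            simpa [Function.update_of_ne hj] using h)
        (by
          intro j
          rw [Finset.filter_erase]
          by_cases hj : j = a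
          · subst hj
            have hqf : q ∈ S.filter (fun o => M o = j) :=
              Finset.mem_filter.2 ⟨hqmem, hMq⟩
            rw [Finset.card_erase_of_mem hqf]
            have h := hcard j
            simp only [Function.update_self]
            omega
          · rw [Finset.erase_eq_of_notMem (fun hx => hj (by
              have h := (Finset.mem_filter.1 hx).2
              rw [← h]
              exact hMq))]
            simpa [Function.update_of_ne hj] using hcard j)
        (by
          intro j o ho hMo hfj
          have hoS : o ∈ S := Finset.mem_of_mem_erase ho
          have hone : o ≠ q := Finset.ne_of_mem_erase ho
          by_cases hj : j = a
          · subst hj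
            simp only [Function.update_self] at hfj ⊢
            have h0 : (P j).le o q := hle j o hoS hMo hfa
            by_contra hcon
            have hlt2 : (P j).lt (p j (f j + 1 + 1)) o := by
              letI := P j
              exact lt_of_not_ge hcon
            rcases rank_step hp (by omega) hfj hMo hlt2 with h | h
            · exact hone h
            · letI := P j
              exact absurd h0 (not_le.2 h)
          · simp only [Function.update_of_ne hj] at hfj ⊢
            exact hle j o hoS hMo hfj)
        (by
          intro o ho
          have h2 := hout o (Finset.mem_of_mem_erase ho)
          rw [seqAlloc_cons P a rest S hS, hfav] at h2
          rcases List.mem_cons.1 h2 with h3 | h3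
          · exact absurd (congrArg Prod.snd h3) (Finset.ne_of_mem_erase ho)
          · exact h3)
        s hs'
      rw [hIH]
      have hget : (a :: rest).get ⟨s + 1, hs⟩ = rest.get ⟨s, hs'⟩ := rfl
      rw [hget]
      set b := rest.get ⟨s, hs'⟩ with hbdef
      rw [List.take_succ_cons]
      have harith : List.count b (List.take s rest) + Function.update f a (f a + 1) b + 1
          = List.count b (a :: List.take s rest) + f b + 1 := by
        by_cases hba : b = a
        · subst hba
          rw [Function.update_self, List.count_cons_self]
          omega
        · rw [Function.update_of_ne hba, List.count_cons_of_ne (Ne.symm hba)]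
      rw [harith]

lemma rounds_count {n k : ℕ} {rounds : List (List (Fin n))} (hlen : rounds.length = k)
    (hr : ∀ r ∈ rounds, r.length = n ∧ ∀ a : Fin n, r.count a = 1) (a : Fin n) :
    rounds.flatten.count a = k := by
  rw [List.count_flatten]
  have h : rounds.map (List.count a) = List.replicate k 1 := by
    rw [List.eq_replicate_iff]
    refine ⟨by simp [hlen], ?_⟩
    intro x hx
    rcases List.mem_map.1 hx with ⟨r, hr', rfl⟩
    exact (hr r hr').2 a
  rw [h, List.sum_replicate, smul_eq_mul, mul_one]

lemma rounds_length {n k : ℕ} {rounds : List (List (Fin n))} (hlen : rounds.length = k)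
    (hr : ∀ r ∈ rounds, r.length = n ∧ ∀ a : Fin n, r.count a = 1) :
    rounds.flatten.length = k * n := by
  rw [List.length_flatten]
  have h : rounds.map List.length = List.replicate k n := by
    rw [List.eq_replicate_iff]
    refine ⟨by simp [hlen], ?_⟩
    intro x hx
    rcases List.mem_map.1 hx with ⟨r, hr', rfl⟩
    exact (hr r hr').1
  rw [h, List.sum_replicate, smul_eq_mul]

lemma rounds_count_take {n : ℕ} (hn : 0 < n) :
    ∀ (rounds : List (List (Fin n))),
      (∀ r ∈ rounds, r.length = n ∧ ∀ a : Fin n, r.count a = 1) →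
      ∀ s (hs : s < rounds.flatten.length),
        (rounds.flatten.take s).count (rounds.flatten.get ⟨s, hs⟩) = s / n
  | [], _, s, hs => absurd hs (by simp)
  | r :: rest, hr, s, hs => by
    obtain ⟨hrn, hrc⟩ := hr r List.mem_cons_self
    have hflat : (r :: rest).flatten = r ++ rest.flatten := by simp
    by_cases hsn : s < n
    · have hsr : s < r.length := by omega
      have hget : (r :: rest).flatten.get ⟨s, hs⟩ = r.get ⟨s, hsr⟩ := by
        simp only [List.get_eq_getElem, hflat]
        exact List.getElem_append_left hsr
      have htake : (r :: rest).flatten.take s = r.take s := by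
        rw [hflat, List.take_append_of_le_length (by omega)]
      rw [hget, htake, Nat.div_eq_of_lt hsn]
      set a := r.get ⟨s, hsr⟩ with hadef
      have h1 : r.count a = 1 := hrc a
      have hmem : a ∈ r.drop s := by
        have h0 : 0 < (r.drop s).length := by
          rw [List.length_drop]; omega
        have h2 : (r.drop s)[0]'h0 = r[s]'hsr := by
          rw [List.getElem_drop]
          congr 1
        have h3 := List.getElem_mem h0
        rw [h2] at h3
        exact h3
      have h2 : 1 ≤ (r.drop s).count a := List.count_pos_iff.2 hmem
      have h3 : r.count a = (r.take s).count a + (r.drop s).count a := by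
        conv_lhs => rw [← List.take_append_drop s r]
        rw [List.count_append]
      omega
    · have hlen' : (r :: rest).flatten.length = n + rest.flatten.length := by
        rw [hflat, List.length_append, hrn]
      have hs' : s - n < rest.flatten.length := by
        rw [hlen'] at hs; omega
      have hget : (r :: rest).flatten.get ⟨s, hs⟩ = rest.flatten.get ⟨s - n, hs'⟩ := by
        simp only [List.get_eq_getElem, hflat]
        rw [List.getElem_append_right (by omega)]
        congr 1
        omega
      have htake : (r :: rest).flatten.take s = r ++ rest.flatten.take (s - n) := by
        rw [hflat, List.take_append,
          List.take_of_length_le (by rw [hrn]; omega), hrn]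
      rw [hget, htake, List.count_append,
        rounds_count_take hn rest (fun r' hr' => hr r' (List.mem_cons_of_mem _ hr')) (s - n) hs',
        hrc]
      conv_rhs => rw [show s = (s - n) + n by omega]
      rw [Nat.add_div_right _ hn]
      omega

/-- If `M` is the outcome of some recursively balanced policy, then for
every recursively balanced policy `π` with outcome `M`, at the turn in position `s`
(which lies in round `s / n + 1`) the agent whose turn it is picks exactly her item
`p _ (s / n + 1)` ranked for that round. -/
theorem recursively_balanced_round_picks
    {ι : Type} [Fintype ι] [DecidableEq ι] {n k : ℕ} (hn : 0 < n) (hk : 1 ≤ k)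
    (hcard : Fintype.card ι = k * n)
    (P : Fin n → LinearOrder ι) (M : ι → Fin n)
    (p : Fin n → ℕ → ι) (hp : IsRankingOf P k M p)
    (hM : ∃ π : List (Fin n), RecBalanced n k π ∧ IsOutcome P π M) :
    ∀ π : List (Fin n), RecBalanced n k π → IsOutcome P π M →
      ∀ (s : ℕ) (hs : s < π.length),
        (seqAlloc P π Finset.univ)[s]? =
          some (π.get ⟨s, hs⟩, p (π.get ⟨s, hs⟩) (s / n + 1)) := by
  intro π hrec hπ s hs
  obtain ⟨rounds, hlenr, hprops, rfl⟩ := hrec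
  have hπlen : rounds.flatten.length = k * n := rounds_length hlenr hprops
  have hb : ∀ j, (Finset.univ.filter (fun o => M o = j)).card = k := by
    intro j
    rw [outcome_balanced _ (by rw [hπlen, hcard]) hπ j, rounds_count hlenr hprops]
  have hmain := core P M p hp hb rounds.flatten Finset.univ (fun _ => 0)
    (fun j => by simp [rounds_count hlenr hprops])
    (fun j => by simpa using hb j)
    (by
      intro j o _ hMo _
      letI := P j
      obtain ⟨hM1, hc1⟩ := hp j 1 le_rfl hk
      by_contra hcon
      have hlt : (P j).lt (p j 1) o := lt_of_not_ge hcon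
      have hmem : o ∈ Finset.univ.filter (fun o => M o = j ∧ (P j).lt (p j 1) o) := by
        simp only [Finset.mem_filter, Finset.mem_univ, true_and]
        exact ⟨hMo, hlt⟩
      have hempty : (Finset.univ.filter (fun o => M o = j ∧ (P j).lt (p j 1) o)) = ∅ :=
        Finset.card_eq_zero.1 (by rw [hc1])
      rw [hempty] at hmem
      exact absurd hmem (Finset.notMem_empty o))
    (fun o _ => hπ o)
    s hs
  rw [hmain, rounds_count_take hn rounds hprops s hs]
end

section
/- Suppose the allocation M is the outcome of a balanced alternation policy whose odd-numbered rounds use the order π' over the agents (and whose even-numbered rounds use the reverse of π'). Then for every edge a → b of the directed graph G_M, agent a precedes agent b in π'; in particular, G_M contains no cycle. -/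
open Finset
open scoped Classical

section Auxiliary

variable {ι : Type}

lemma not_lt_self' (Lo : LinearOrder ι) (a : ι) : ¬ Lo.lt a a := by
  letI := Lo; exact lt_irrefl a

lemma lt_asymm'' (Lo : LinearOrder ι) {a b : ι} (h : Lo.lt a b) : ¬ Lo.lt b a := by
  letI := Lo; exact lt_asymm h

lemma lt_trans'' (Lo : LinearOrder ι) {a b c : ι} (h1 : Lo.lt a b) (h2 : Lo.lt b c) :
    Lo.lt a c := by
  letI := Lo; exact lt_trans h1 h2

lemma lt_or_gt'' (Lo : LinearOrder ι) {a b : ι} (h : a ≠ b) : Lo.lt a b ∨ Lo.lt b a := by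
  letI := Lo; exact lt_or_gt_of_ne h

lemma lt_favorite' (Lo : LinearOrder ι) (S : Finset ι) (h : S.Nonempty) {y : ι}
    (hy : y ∈ S) (hne : y ≠ favorite Lo S h) : Lo.lt y (favorite Lo S h) := by
  letI := Lo
  exact lt_of_le_of_ne (Finset.le_max' S y hy) hne

lemma rank_unique (Lo : LinearOrder ι) (A : Finset ι) {x y : ι} (hx : x ∈ A) (hy : y ∈ A)
    (h : (A.filter fun o => Lo.lt x o).card = (A.filter fun o => Lo.lt y o).card) :
    x = y := by
  by_contra hne
  have key : ∀ u v : ι, v ∈ A → Lo.lt u v →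
      (A.filter fun o => Lo.lt v o).card < (A.filter fun o => Lo.lt u o).card := by
    intro u v hv huv
    apply Finset.card_lt_card
    rw [Finset.ssubset_iff_of_subset (fun o ho => Finset.mem_filter.mpr
      ⟨(Finset.mem_filter.mp ho).1, lt_trans'' Lo huv (Finset.mem_filter.mp ho).2⟩)]
    exact ⟨v, Finset.mem_filter.mpr ⟨hv, huv⟩,
      fun hmem => not_lt_self' Lo v (Finset.mem_filter.mp hmem).2⟩
  rcases lt_or_gt'' Lo hne with h1 | h1
  · exact absurd h (Nat.ne_of_gt (key x y hy h1))
  · exact absurd h (Nat.ne_of_lt (key y x hx h1))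

lemma flatten_len {α : Type} (n : ℕ) : ∀ (rs : List (List α)), (∀ l ∈ rs, l.length = n) →
    rs.flatten.length = rs.length * n
  | [], _ => by simp
  | hd :: tl, h => by
    simp only [List.flatten_cons, List.length_append, List.length_cons,
      flatten_len n tl (fun l hl => h l (List.mem_cons_of_mem _ hl)),
      h hd (List.mem_cons_self)]
    ring

lemma flatten_get? {α : Type} (n : ℕ) : ∀ (rs : List (List α)) (_ : ∀ l ∈ rs, l.length = n)
    (r c : ℕ) (_ : c < n) (l : List α) (_ : rs[r]? = some l),
    rs.flatten[r * n + c]? = l[c]?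
  | [], _, r, c, _, l, hl => by simp at hl
  | hd :: tl, h, r, c, hc, l, hl => by
    have hhd : hd.length = n := h hd (List.mem_cons_self)
    cases r with
    | zero =>
      simp only [List.getElem?_cons_zero, Option.some.injEq] at hl
      subst hl
      simp only [List.flatten_cons, Nat.zero_mul, Nat.zero_add]
      exact List.getElem?_append_left (by rw [hhd]; exact hc)
    | succ s =>
      simp only [List.getElem?_cons_succ] at hl
      simp only [List.flatten_cons]
      have he : (s + 1) * n + c = hd.length + (s * n + c) := by rw [hhd]; ring
      rw [List.getElem?_append_right (by rw [he]; exact Nat.le_add_right _ _), he,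
        Nat.add_sub_cancel_left]
      exact flatten_get? n tl (fun l hl => h l (List.mem_cons_of_mem _ hl)) s c hc l hl

lemma seqAlloc_spec {n : ℕ} [DecidableEq ι] (P : Fin n → LinearOrder ι) :
    ∀ (turns : List (Fin n)) (S : Finset ι), turns.length ≤ S.card →
    (seqAlloc P turns S).length = turns.length ∧
    (∀ (t : ℕ) (ht : t < (seqAlloc P turns S).length) (ht2 : t < turns.length),
      ((seqAlloc P turns S)[t]'ht).1 = turns[t]'ht2) ∧
    (∀ pr ∈ seqAlloc P turns S, pr.2 ∈ S) ∧
    (∀ (t t' : ℕ) (ht : t < (seqAlloc P turns S).length)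
      (ht' : t' < (seqAlloc P turns S).length), t < t' →
      (P (((seqAlloc P turns S)[t]'ht).1)).lt ((seqAlloc P turns S)[t']'ht').2
        ((seqAlloc P turns S)[t]'ht).2)
  | [], S, _ => by
    refine ⟨by simp [seqAlloc], ?_, ?_, ?_⟩ <;> simp [seqAlloc]
  | a :: rest, S, hle => by
    simp only [List.length_cons] at hle
    have hS : S.Nonempty := Finset.card_pos.mp (by omega)
    have hfmem : favorite (P a) S hS ∈ S := @Finset.max'_mem ι (P a) S hS
    have hcard' : rest.length ≤ (S.erase (favorite (P a) S hS)).card := by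
      rw [Finset.card_erase_of_mem hfmem]; omega
    obtain ⟨ih1, ih2, ih3, ih4⟩ := seqAlloc_spec P rest (S.erase (favorite (P a) S hS)) hcard'
    rw [show seqAlloc P (a :: rest) S = (a, favorite (P a) S hS) ::
      seqAlloc P rest (S.erase (favorite (P a) S hS)) by rw [seqAlloc, dif_pos hS]]
    refine ⟨by simp [ih1], ?_, ?_, ?_⟩
    · intro t ht ht2
      cases t with
      | zero => rfl
      | succ s =>
        simp only [List.getElem_cons_succ]
        exact ih2 s (by simpa using ht) (by simpa using ht2)
    · intro pr hpr
      rcases List.mem_cons.mp hpr with h | h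
      · rw [h]; exact hfmem
      · exact Finset.mem_of_mem_erase (ih3 pr h)
    · intro t t' ht ht' hlt
      cases t' with
      | zero => omega
      | succ s' =>
        have hs' : s' < (seqAlloc P rest (S.erase (favorite (P a) S hS))).length := by
          simpa using ht'
        cases t with
        | zero =>
          simp only [List.getElem_cons_zero, List.getElem_cons_succ]
          have hmem := ih3 _ (List.getElem_mem hs')
          exact lt_favorite' (P a) S hS (Finset.mem_of_mem_erase hmem)
            (Finset.ne_of_mem_erase hmem)
        | succ s =>
          simp only [List.getElem_cons_succ]
          exact ih4 s s' (by simpa using ht) hs' (by omega)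

end Auxiliary

/-- If `M` is the outcome of the balanced alternation policy whose
odd-numbered rounds use the order `π'` (and even-numbered rounds its reverse), then every
edge `a → b` of `G_M` satisfies that `a` precedes `b` in `π'`; in particular `G_M` is
acyclic. -/
theorem balanced_alternation_GM_acyclic
    {ι : Type} [Fintype ι] [DecidableEq ι] {n k : ℕ} (hn : 0 < n) (hk : 1 ≤ k)
    (hcard : Fintype.card ι = k * n)
    (P : Fin n → LinearOrder ι) (M : ι → Fin n) (hbal : BalancedAlloc k M)
    (p : Fin n → ℕ → ι) (hp : IsRankingOf P k M p)
    (π' : List (Fin n)) (hlen : π'.length = n) (hperm : ∀ a : Fin n, π'.count a = 1)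
    (hout : IsOutcome P
      (((List.range k).map (fun r => if r % 2 = 0 then π' else π'.reverse)).flatten) M) :
    (∀ a b : Fin n, GM P k p a b → π'.idxOf a < π'.idxOf b) ∧
      ∀ a : Fin n, ¬ Relation.TransGen (GM P k p) a a := by
  classical
  obtain ⟨o₀⟩ : Nonempty ι := Fintype.card_pos_iff.mp (by rw [hcard]; exact Nat.mul_pos hk hn)
  set f : ℕ → List (Fin n) := fun r => if r % 2 = 0 then π' else π'.reverse with hf
  set R : List (List (Fin n)) := (List.range k).map f with hR
  set pol : List (Fin n) := R.flatten with hpol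
  have hRlen : ∀ l ∈ R, l.length = n := by
    intro l hl
    rw [hR] at hl
    simp only [List.mem_map, List.mem_range] at hl
    obtain ⟨r, -, rfl⟩ := hl
    show (if r % 2 = 0 then π' else π'.reverse).length = n
    by_cases h2 : r % 2 = 0 <;> simp [h2, hlen]
  have hRk : R.length = k := by rw [hR]; simp
  have hpolen : pol.length = k * n := by
    rw [hpol, flatten_len n R hRlen, hRk]
  have hidx : ∀ j : Fin n, π'.idxOf j < n := by
    intro j
    have h1 : j ∈ π' := List.count_pos_iff.mp (by rw [hperm j]; omega)
    have := List.idxOf_lt_length_iff.mpr h1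
    rwa [hlen] at this
  set cr : Fin n → ℕ → ℕ :=
    fun j r => if r % 2 = 0 then π'.idxOf j else n - 1 - π'.idxOf j with hcr
  have hcrlt : ∀ j r, cr j r < n := by
    intro j r
    have := hidx j
    show (if r % 2 = 0 then π'.idxOf j else n - 1 - π'.idxOf j) < n
    by_cases h2 : r % 2 = 0
    · rw [if_pos h2]; exact hidx j
    · rw [if_neg h2]; omega
  set pos : Fin n → ℕ → ℕ := fun j r => r * n + cr j r with hposd
  have hposlt : ∀ j r, r < k → pos j r < pol.length := by
    intro j r hr
    rw [hpolen]
    show r * n + cr j r < k * n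
    calc r * n + cr j r < r * n + n := Nat.add_lt_add_left (hcrlt j r) _
    _ = (r + 1) * n := by ring
    _ ≤ k * n := Nat.mul_le_mul hr (le_refl n)
  have hgetpol : ∀ (j : Fin n) (r : ℕ), r < k → pol[pos j r]? = some j := by
    intro j r hr
    have hfr : R[r]? = some (f r) := by
      rw [hR, List.getElem?_map, List.getElem?_range hr]
      rfl
    have hfl := flatten_get? n R hRlen r (cr j r) (hcrlt j r) (f r) hfr
    show R.flatten[r * n + cr j r]? = some j
    rw [hfl]
    show (if r % 2 = 0 then π' else π'.reverse)[
      if r % 2 = 0 then π'.idxOf j else n - 1 - π'.idxOf j]? = some j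
    by_cases h2 : r % 2 = 0
    · rw [if_pos h2, if_pos h2,
        List.getElem?_eq_getElem (show π'.idxOf j < π'.length by rw [hlen]; exact hidx j),
        List.getElem_idxOf]
    · rw [if_neg h2, if_neg h2]
      have hb2 : n - 1 - π'.idxOf j < π'.length := by rw [hlen]; omega
      rw [List.getElem?_reverse hb2, hlen]
      have he2 : n - 1 - (n - 1 - π'.idxOf j) = π'.idxOf j := by
        have := hidx j; omega
      rw [he2,
        List.getElem?_eq_getElem (show π'.idxOf j < π'.length by rw [hlen]; exact hidx j),
        List.getElem_idxOf]
  have hgetpol' : ∀ (j : Fin n) (r : ℕ) (_ : r < k) (hb : pos j r < pol.length),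
      pol[pos j r]'hb = j := fun j r hr hb => Option.some.inj ((List.getElem?_eq_getElem hb).symm.trans (hgetpol j r hr))
  obtain ⟨hLlen, hagent, -, horder⟩ := seqAlloc_spec P pol Finset.univ
    (by rw [hpolen, Finset.card_univ, hcard])
  set L : List (Fin n × ι) := seqAlloc P pol Finset.univ with hLd
  have houtL : ∀ o : ι, (M o, o) ∈ L := hout
  have hinj : ∀ (t t' : ℕ) (ht : t < L.length) (ht' : t' < L.length),
      (L[t]'ht).2 = (L[t']'ht').2 → t = t' := by
    intro t t' ht ht' he
    rcases Nat.lt_trichotomy t t' with h2 | h2 | h2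
    · have := horder t t' ht ht' h2
      rw [he] at this
      exact absurd this (not_lt_self' _ _)
    · exact h2
    · have := horder t' t ht' ht h2
      rw [he] at this
      exact absurd this (not_lt_self' _ _)
  have hM2 : ∀ (t : ℕ) (ht : t < L.length), M ((L[t]'ht).2) = (L[t]'ht).1 := by
    intro t ht
    have hmem := houtL ((L[t]'ht).2)
    rw [List.mem_iff_getElem] at hmem
    obtain ⟨s, hs, hse⟩ := hmem
    have h2 : (L[s]'hs).2 = (L[t]'ht).2 := by rw [hse]
    have h3 := hinj s t hs ht h2
    subst h3
    exact (congrArg Prod.fst hse).symm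
  have hbnd : ∀ (j : Fin n) (r : ℕ), r < k → pos j r < L.length := by
    intro j r hr; rw [hLlen]; exact hposlt j r hr
  set x : Fin n → ℕ → ι := fun j r => (L.getD (pos j r) (⟨0, hn⟩, o₀)).2 with hxd
  have hxval : ∀ (j : Fin n) (r : ℕ) (hb : pos j r < L.length),
      x j r = (L[pos j r]'hb).2 := by
    intro j r hb
    show (L.getD (pos j r) (⟨0, hn⟩, o₀)).2 = _
    rw [List.getD_eq_getElem L _ hb]
  have hagent' : ∀ (j : Fin n) (r : ℕ) (hr : r < k) (hb : pos j r < L.length),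
      (L[pos j r]'hb).1 = j := by
    intro j r hr hb
    rw [hagent (pos j r) hb (hLlen ▸ hb)]
    exact hgetpol' j r hr _
  have hMx : ∀ (j : Fin n) (r : ℕ), r < k → M (x j r) = j := by
    intro j r hr
    rw [hxval j r (hbnd j r hr), hM2 (pos j r) (hbnd j r hr), hagent' j r hr (hbnd j r hr)]
  have hdec : ∀ (j : Fin n) (r r' : ℕ), r < r' → r' < k → (P j).lt (x j r') (x j r) := by
    intro j r r' hrr hr'
    have hr : r < k := by omega
    have hplt : pos j r < pos j r' := by
      show r * n + cr j r < r' * n + cr j r'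
      calc r * n + cr j r < r * n + n := Nat.add_lt_add_left (hcrlt j r) _
      _ = (r + 1) * n := by ring
      _ ≤ r' * n := Nat.mul_le_mul hrr (le_refl n)
      _ ≤ r' * n + cr j r' := Nat.le_add_right _ _
    have h2 := horder (pos j r) (pos j r') (hbnd j r hr) (hbnd j r' hr') hplt
    rw [hagent' j r hr (hbnd j r hr)] at h2
    rw [hxval j r (hbnd j r hr), hxval j r' (hbnd j r' hr')]
    exact h2
  have hxinj : ∀ (j : Fin n) (r r' : ℕ), r < k → r' < k → x j r = x j r' → r = r' := by
    intro j r r' hr hr' he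
    rcases Nat.lt_trichotomy r r' with h2 | h2 | h2
    · have := hdec j r r' h2 hr'
      rw [he] at this
      exact absurd this (not_lt_self' _ _)
    · exact h2
    · have := hdec j r' r h2 hr
      rw [he] at this
      exact absurd this (not_lt_self' _ _)
  have hAeq : ∀ j : Fin n,
      (Finset.range k).image (x j) = Finset.univ.filter (fun o => M o = j) := by
    intro j
    apply Finset.eq_of_subset_of_card_le
    · intro o ho
      rw [Finset.mem_image] at ho
      obtain ⟨r, hr, rfl⟩ := ho
      rw [Finset.mem_range] at hr
      exact Finset.mem_filter.mpr ⟨Finset.mem_univ _, hMx j r hr⟩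
    · have hinjOn : Set.InjOn (x j) ↑(Finset.range k) := by
        intro r hr r' hr' he
        simp only [Finset.coe_range, Set.mem_Iio] at hr hr'
        exact hxinj j r r' hr hr' he
      rw [hbal j, Finset.card_image_of_injOn hinjOn, Finset.card_range]
  have hcount : ∀ (j : Fin n) (r : ℕ), r < k →
      ((Finset.univ.filter (fun o => M o = j)).filter
        (fun o => (P j).lt (x j r) o)).card = r := by
    intro j r hr
    rw [← hAeq j, Finset.filter_image]
    have hset : (Finset.range k).filter (fun s => (P j).lt (x j r) (x j s))
        = Finset.range r := by
      ext s
      simp only [Finset.mem_filter, Finset.mem_range]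
      constructor
      · rintro ⟨hsk, hlt2⟩
        by_contra hns
        push_neg at hns
        rcases Nat.eq_or_lt_of_le hns with he | hlt3
        · rw [← he] at hlt2
          exact not_lt_self' _ _ hlt2
        · exact lt_asymm'' _ (hdec j r s hlt3 hsk) hlt2
      · intro hsr
        exact ⟨by omega, hdec j s r hsr hr⟩
    rw [hset]
    have hinjOn2 : Set.InjOn (x j) ↑(Finset.range r) := by
      intro a ha b hb he
      simp only [Finset.coe_range, Set.mem_Iio] at ha hb
      exact hxinj j a b (by omega) (by omega) he
    rw [Finset.card_image_of_injOn hinjOn2, Finset.card_range]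
  have hkey : ∀ (j : Fin n) (r : ℕ), r < k → x j r = p j (r + 1) := by
    intro j r hr
    obtain ⟨hp1, hp2⟩ := hp j (r + 1) (by omega) (by omega)
    have e1 : ((Finset.univ.filter (fun o => M o = j)).filter
        (fun o => (P j).lt (x j r) o)).card = r := hcount j r hr
    have e2 : ((Finset.univ.filter (fun o => M o = j)).filter
        (fun o => (P j).lt (p j (r + 1)) o)).card = r := by
      rw [Finset.filter_filter]
      simpa using hp2
    exact rank_unique (P j) (Finset.univ.filter (fun o => M o = j))
      (Finset.mem_filter.mpr ⟨Finset.mem_univ _, hMx j r hr⟩)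
      (Finset.mem_filter.mpr ⟨Finset.mem_univ _, hp1⟩)
      (e1.trans e2.symm)
  have hround : ∀ (u v : Fin n) (r : ℕ), r < k → pos v r < pos u r →
      ¬ (P v).lt (x v r) (x u r) := by
    intro u v r hr hplt hcon
    have h2 := horder (pos v r) (pos u r) (hbnd v r hr) (hbnd u r hr) hplt
    rw [hagent' v r hr (hbnd v r hr)] at h2
    rw [hxval v r (hbnd v r hr), hxval u r (hbnd u r hr)] at hcon
    exact lt_asymm'' _ h2 hcon
  have hidxinj : ∀ u v : Fin n, π'.idxOf u = π'.idxOf v → u = v := by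
    intro u v h2
    have hu : π'[π'.idxOf u]? = some u := by
      rw [List.getElem?_eq_getElem (show π'.idxOf u < π'.length by rw [hlen]; exact hidx u),
        List.getElem_idxOf]
    have hv : π'[π'.idxOf v]? = some v := by
      rw [List.getElem?_eq_getElem (show π'.idxOf v < π'.length by rw [hlen]; exact hidx v),
        List.getElem_idxOf]
    rw [h2, hv] at hu
    exact (Option.some.inj hu).symm
  have main : ∀ a b : Fin n, GM P k p a b → π'.idxOf a < π'.idxOf b := by
    intro a b hab
    rcases hab with ⟨i, hi1, hik, hio, hlt2⟩ | ⟨i, hi1, hik, hie, hlt2⟩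
    · set r := i - 1 with hr0
      have hrk : r < k := by omega
      have hre : r % 2 = 0 := by omega
      have hi : i = r + 1 := by omega
      rw [hi, ← hkey b r hrk, ← hkey a r hrk] at hlt2
      have hne : a ≠ b := by
        rintro rfl
        exact not_lt_self' _ _ hlt2
      have hnp : ¬ pos b r < pos a r := fun h2 => hround a b r hrk h2 hlt2
      have h3 : r * n + cr a r ≤ r * n + cr b r := Nat.le_of_not_lt hnp
      have h4 : cr a r ≤ cr b r := (add_le_add_iff_left _).mp h3
      have hcra : cr a r = π'.idxOf a := by
        show (if r % 2 = 0 then π'.idxOf a else n - 1 - π'.idxOf a) = π'.idxOf a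
        rw [if_pos hre]
      have hcrb : cr b r = π'.idxOf b := by
        show (if r % 2 = 0 then π'.idxOf b else n - 1 - π'.idxOf b) = π'.idxOf b
        rw [if_pos hre]
      rw [hcra, hcrb] at h4
      rcases Nat.lt_or_ge (π'.idxOf a) (π'.idxOf b) with h5 | h5
      · exact h5
      · exact absurd (hidxinj a b (le_antisymm h4 h5)) hne
    · set r := i - 1 with hr0
      have hrk : r < k := by omega
      have hro : ¬ r % 2 = 0 := by omega
      have hi : i = r + 1 := by omega
      rw [hi, ← hkey b r hrk, ← hkey a r hrk] at hlt2
      have hne : a ≠ b := by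
        rintro rfl
        exact not_lt_self' _ _ hlt2
      have hnp : ¬ pos a r < pos b r := fun h2 => hround b a r hrk h2 hlt2
      have h3 : r * n + cr b r ≤ r * n + cr a r := Nat.le_of_not_lt hnp
      have h4 : cr b r ≤ cr a r := (add_le_add_iff_left _).mp h3
      have hcra : cr a r = n - 1 - π'.idxOf a := by
        show (if r % 2 = 0 then π'.idxOf a else n - 1 - π'.idxOf a) = _
        rw [if_neg hro]
      have hcrb : cr b r = n - 1 - π'.idxOf b := by
        show (if r % 2 = 0 then π'.idxOf b else n - 1 - π'.idxOf b) = _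
        rw [if_neg hro]
      rw [hcra, hcrb] at h4
      have ha := hidx a
      have hb := hidx b
      rcases Nat.lt_or_ge (π'.idxOf a) (π'.idxOf b) with h5 | h5
      · exact h5
      · have h6 : π'.idxOf a = π'.idxOf b := by omega
        exact absurd (hidxinj a b h6) hne
  refine ⟨main, ?_⟩
  intro a hcyc
  have mono : ∀ {u v : Fin n}, Relation.TransGen (GM P k p) u v →
      π'.idxOf u < π'.idxOf v := by
    intro u v h2
    induction h2 with
    | single h3 => exact main _ _ h3
    | tail _ h3 ih => exact ih.trans (main _ _ h3)
  exact absurd (mono hcyc) (Nat.lt_irrefl _)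
end
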